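/- arXiv:1809.07481 — 2 statements merged into one kernel-verified Lean document; each statement's English description precedes it below -/
import Mathlib

section
/- Let S be a subset of R^2, let p, q be points of S, and let g be a path in S from p to q such that the first coordinate function t |-> (g t).1 is monotone on [0,1] (either nondecreasing or nonincreasing) and, independently, the second coordinate function t |-> (g t).2 is monotone on [0,1]. Then d_S(p,q) = ||p - q||_1, and g is a shortest path: its L1 length eVariationOn g (Icc 0 1) equals d_S(p,q). -/
open Set

noncomputable section

/-- A path in `S` from `p` to `q`: continuous on `[0,1]`, with the prescribed endpoints,
and staying in `S` on `[0,1]`. The plane carries the `L1` metric via `WithLp 1 (ℝ × ℝ)`. -/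
def IsPathIn (S : Set (WithLp 1 (ℝ × ℝ))) (p q : WithLp 1 (ℝ × ℝ))
    (g : ℝ → WithLp 1 (ℝ × ℝ)) : Prop :=
  ContinuousOn g (Icc 0 1) ∧ g 0 = p ∧ g 1 = q ∧ ∀ x ∈ Icc (0:ℝ) 1, g x ∈ S

/-- The intrinsic `L1` distance in `S`: the infimum of the `L1` lengths (total variations)
of all paths in `S` from `p` to `q` (infinity if there is no such path). -/
def dS (S : Set (WithLp 1 (ℝ × ℝ))) (p q : WithLp 1 (ℝ × ℝ)) : ENNReal :=
  ⨅ (g : ℝ → WithLp 1 (ℝ × ℝ)) (_ : IsPathIn S p q g), eVariationOn g (Icc 0 1)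

private lemma l1_edist (x y : WithLp 1 (ℝ × ℝ)) : edist x y = edist x.ofLp.1 y.ofLp.1 + edist x.ofLp.2 y.ofLp.2 := by
  rw [WithLp.prod_edist_eq_add (by norm_num)]
  norm_num

private lemma evar_neg (f : ℝ → ℝ) (s : Set ℝ) :
    eVariationOn (fun t => -(f t)) s = eVariationOn f s := by
  simp only [eVariationOn, edist_neg_neg]

private lemma coord_var (f : ℝ → ℝ)
    (hf : MonotoneOn f (Icc 0 1) ∨ AntitoneOn f (Icc 0 1)) :
    eVariationOn f (Icc (0:ℝ) 1) ≤ edist (f 0) (f 1) := by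
  have h01 : (0:ℝ) ∈ Icc (0:ℝ) 1 := by norm_num
  have h11 : (1:ℝ) ∈ Icc (0:ℝ) 1 := by norm_num
  have key : ∀ f : ℝ → ℝ, MonotoneOn f (Icc 0 1) →
      eVariationOn f (Icc (0:ℝ) 1) ≤ edist (f 0) (f 1) := by
    intro f hf
    have := hf.eVariationOn_le h01 h11
    rw [inter_eq_self_of_subset_left (subset_refl _)] at this
    refine this.trans ?_
    rw [edist_dist, Real.dist_eq]
    exact ENNReal.ofReal_le_ofReal ((le_abs_self _).trans (abs_sub_comm _ _).le)
  rcases hf with hf | hf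
  · exact key f hf
  · have : eVariationOn f (Icc (0:ℝ) 1) ≤ edist (-(f 0)) (-(f 1)) := by
      rw [← evar_neg f]
      exact key (fun t => -(f t)) (fun a ha b hb hab => neg_le_neg (hf ha hb hab))
    rwa [edist_neg_neg] at this

theorem monotone_path_is_shortest (S : Set (WithLp 1 (ℝ × ℝ))) (p q : WithLp 1 (ℝ × ℝ))
    (hp : p ∈ S) (hq : q ∈ S) (g : ℝ → WithLp 1 (ℝ × ℝ)) (hg : IsPathIn S p q g)
    (hx : MonotoneOn (fun t => (g t).ofLp.1) (Icc 0 1) ∨ AntitoneOn (fun t => (g t).ofLp.1) (Icc 0 1))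
    (hy : MonotoneOn (fun t => (g t).ofLp.2) (Icc 0 1) ∨ AntitoneOn (fun t => (g t).ofLp.2) (Icc 0 1)) :
    dS S p q = (‖p - q‖₊ : ENNReal) ∧ eVariationOn g (Icc 0 1) = dS S p q := by
  obtain ⟨hc, h0, h1, hS⟩ := hg
  have hnorm : (‖p - q‖₊ : ENNReal) = edist p q := by rw [edist_nndist, nndist_eq_nnnorm]
  -- upper bound: variation of g ≤ edist p q
  have hsplit : eVariationOn g (Icc (0:ℝ) 1) ≤
      eVariationOn (fun t => (g t).ofLp.1) (Icc (0:ℝ) 1) +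
      eVariationOn (fun t => (g t).ofLp.2) (Icc (0:ℝ) 1) := by
    refine iSup_le ?_
    rintro ⟨n, u, hu, us⟩
    calc ∑ i ∈ Finset.range n, edist (g (u (i + 1))) (g (u i))
        = ∑ i ∈ Finset.range n, (edist (g (u (i+1))).ofLp.1 (g (u i)).ofLp.1
            + edist (g (u (i+1))).ofLp.2 (g (u i)).ofLp.2) := by
          exact Finset.sum_congr rfl fun i _ => l1_edist _ _
      _ = (∑ i ∈ Finset.range n, edist (g (u (i+1))).ofLp.1 (g (u i)).ofLp.1)
            + ∑ i ∈ Finset.range n, edist (g (u (i+1))).ofLp.2 (g (u i)).ofLp.2 :=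
          Finset.sum_add_distrib
      _ ≤ _ := add_le_add (eVariationOn.sum_le (n := n) hu us) (eVariationOn.sum_le (n := n) hu us)
  have hup : eVariationOn g (Icc (0:ℝ) 1) ≤ edist p q := by
    refine hsplit.trans ?_
    have h1' := coord_var _ hx
    have h2' := coord_var _ hy
    calc _ ≤ edist (g 0).ofLp.1 (g 1).ofLp.1 + edist (g 0).ofLp.2 (g 1).ofLp.2 := add_le_add h1' h2'
      _ = edist (g 0) (g 1) := (l1_edist _ _).symm
      _ = edist p q := by rw [h0, h1]
  -- lower bound: any path has variation ≥ edist p q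
  have hlow : edist p q ≤ dS S p q := by
    refine le_iInf fun h => le_iInf fun hh => ?_
    obtain ⟨_, hh0, hh1, _⟩ := hh
    have := eVariationOn.edist_le h (x := (0:ℝ)) (y := (1:ℝ))
      (by norm_num : (0:ℝ) ∈ Icc (0:ℝ) 1) (by norm_num : (1:ℝ) ∈ Icc (0:ℝ) 1)
    rwa [hh0, hh1] at this
  have hdle : dS S p q ≤ eVariationOn g (Icc (0:ℝ) 1) := by
    refine iInf_le_of_le g (iInf_le_of_le ⟨hc, h0, h1, hS⟩ le_rfl)
  have heq : eVariationOn g (Icc (0:ℝ) 1) = edist p q :=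
    le_antisymm hup (hlow.trans hdle)
  have hd : dS S p q = edist p q := le_antisymm (hdle.trans hup) hlow
  exact ⟨hd.trans hnorm.symm, heq.trans hd.symm⟩
end
end

section
/- Let S be a subset of R^2, let s, t, a be points of S, and let B, B' be subsets of S. Assume: (i) every path in S from s to t meets B and also meets B'; (ii) for all p in B and q in B', d_S(p,q) = d_S(p,a) + d_S(a,q). Then d_S(s,t) = d_S(s,a) + d_S(a,t). -/
open Set

noncomputable section

abbrev Pt := WithLp 1 (ℝ × ℝ)

lemma dS_le_of_path {S : Set Pt} {p q : Pt} {g : ℝ → Pt} (hg : IsPathIn S p q g) :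
    dS S p q ≤ eVariationOn g (Icc 0 1) :=
  iInf₂_le g hg

/-- Restriction of a path to a subinterval bounds the intrinsic distance between values. -/
lemma dS_le_var_Icc {S : Set Pt} {g : ℝ → Pt}
    (hc : ContinuousOn g (Icc 0 1)) (hmem : ∀ x ∈ Icc (0:ℝ) 1, g x ∈ S)
    {α β : ℝ} (hα : α ∈ Icc (0:ℝ) 1) (hβ : β ∈ Icc (0:ℝ) 1) (hαβ : α ≤ β) :
    dS S (g α) (g β) ≤ eVariationOn g (Icc α β) := by
  set φ : ℝ → ℝ := fun x => α + x * (β - α) with hφdef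
  have hmono : Monotone φ := fun x y hxy => by
    dsimp [φ]
    have : 0 ≤ β - α := by linarith
    nlinarith
  have himg : ∀ x ∈ Icc (0:ℝ) 1, φ x ∈ Icc α β := by
    intro x hx
    constructor
    · dsimp [φ]; nlinarith [hx.1, hx.2]
    · dsimp [φ]; nlinarith [hx.1, hx.2]
  have hsub : Icc α β ⊆ Icc (0:ℝ) 1 := Icc_subset_Icc hα.1 hβ.2
  have hpath : IsPathIn S (g α) (g β) (g ∘ φ) := by
    refine ⟨?_, ?_, ?_, ?_⟩
    · exact hc.comp ((continuous_const.add (continuous_id.mul continuous_const)).continuousOn)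
        (fun x hx => hsub (himg x hx))
    · simp [φ]
    · simp [φ]
    · intro x hx; exact hmem _ (hsub (himg x hx))
  calc dS S (g α) (g β) ≤ eVariationOn (g ∘ φ) (Icc 0 1) := dS_le_of_path hpath
    _ = eVariationOn g (φ '' Icc 0 1) :=
        eVariationOn.comp_eq_of_monotoneOn g φ (hmono.monotoneOn _)
    _ ≤ eVariationOn g (Icc α β) := by
        refine eVariationOn.mono g ?_
        rintro _ ⟨x, hx, rfl⟩
        exact himg x hx

lemma dS_symm (S : Set Pt) (p q : Pt) : dS S p q = dS S q p := by
  have key : ∀ p q : Pt, dS S q p ≤ dS S p q := by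
    intro p q
    conv_rhs => rw [dS]
    refine le_iInf fun g => le_iInf fun hg => ?_
    set ρ : ℝ → ℝ := fun x => 1 - x with hρdef
    have hanti : Antitone ρ := fun x y hxy => by dsimp [ρ]; linarith
    have himg : ∀ x ∈ Icc (0:ℝ) 1, ρ x ∈ Icc (0:ℝ) 1 := by
      intro x hx; exact ⟨by dsimp [ρ]; linarith [hx.2], by dsimp [ρ]; linarith [hx.1]⟩
    have hpath : IsPathIn S q p (g ∘ ρ) := by
      refine ⟨hg.1.comp ((continuous_const.sub continuous_id).continuousOn) himg, ?_, ?_, ?_⟩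
      · simp [ρ, hg.2.2.1]
      · simp [ρ, hg.2.1]
      · intro x hx; exact hg.2.2.2 _ (himg x hx)
    calc dS S q p ≤ eVariationOn (g ∘ ρ) (Icc 0 1) := dS_le_of_path hpath
      _ = eVariationOn g (ρ '' Icc 0 1) :=
          eVariationOn.comp_eq_of_antitoneOn g ρ (hanti.antitoneOn _)
      _ ≤ eVariationOn g (Icc 0 1) := by
          refine eVariationOn.mono g ?_
          rintro _ ⟨x, hx, rfl⟩
          exact himg x hx
  exact le_antisymm (key q p) (key p q)

/-- Concatenation of paths. -/
lemma path_concat {S : Set Pt} {p q r : Pt} {g h : ℝ → Pt}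
    (hg : IsPathIn S p q g) (hh : IsPathIn S q r h) :
    ∃ k : ℝ → Pt, IsPathIn S p r k ∧
      eVariationOn k (Icc 0 1) ≤ eVariationOn g (Icc 0 1) + eVariationOn h (Icc 0 1) := by
  classical
  set k : ℝ → Pt := (Iic (2⁻¹ : ℝ)).piecewise (fun x => g (2*x)) (fun x => h (2*x - 1)) with hk
  have hmem_half : (2⁻¹ : ℝ) ∈ Icc (0:ℝ) 1 := by norm_num
  have himg1 : ∀ x ∈ Icc (0:ℝ) 2⁻¹, (2*x) ∈ Icc (0:ℝ) 1 := by
    intro x hx; exact ⟨by linarith [hx.1], by linarith [hx.2]⟩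
  have himg2 : ∀ x ∈ Icc (2⁻¹:ℝ) 1, (2*x - 1) ∈ Icc (0:ℝ) 1 := by
    intro x hx; constructor
    · have := hx.1; linarith
    · linarith [hx.2]
  have hcont1 : ContinuousOn (fun x => g (2*x)) (Icc 0 2⁻¹) :=
    hg.1.comp ((continuous_const.mul continuous_id).continuousOn) himg1
  have hcont2 : ContinuousOn (fun x => h (2*x - 1)) (Icc 2⁻¹ 1) :=
    hh.1.comp (((continuous_const.mul continuous_id).sub continuous_const).continuousOn) himg2
  have hfr : frontier (Iic (2⁻¹ : ℝ)) = {(2⁻¹ : ℝ)} := frontier_Iic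
  have hH : Icc (0:ℝ) 2⁻¹ ∩ frontier (Iic (2⁻¹:ℝ)) = Icc (2⁻¹:ℝ) 1 ∩ frontier (Iic (2⁻¹:ℝ)) := by
    rw [hfr]
    rw [inter_eq_right.mpr (singleton_subset_iff.mpr (by norm_num : (2⁻¹:ℝ) ∈ Icc (0:ℝ) 2⁻¹)),
        inter_eq_right.mpr (singleton_subset_iff.mpr (by norm_num : (2⁻¹:ℝ) ∈ Icc (2⁻¹:ℝ) 1))]
  have hEq : EqOn (fun x => g (2*x)) (fun x => h (2*x - 1))
      (Icc (0:ℝ) 2⁻¹ ∩ frontier (Iic (2⁻¹:ℝ))) := by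
    rw [hfr]
    rintro x ⟨-, hx⟩
    rcases hx with rfl
    have hq : g 1 = h 0 := hg.2.2.1.trans hh.2.1.symm
    show g (2 * 2⁻¹) = h (2 * 2⁻¹ - 1)
    norm_num [hq]
  have hite : (Iic (2⁻¹:ℝ)).ite (Icc (0:ℝ) 2⁻¹) (Icc (2⁻¹:ℝ) 1) = Icc (0:ℝ) 1 := by
    ext x
    simp only [Set.ite, mem_union, mem_inter_iff, mem_diff, mem_Icc, mem_Iic]
    constructor
    · rintro (⟨⟨h1, h2⟩, -⟩ | ⟨⟨h1, h2⟩, -⟩) <;> constructor <;> linarith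
    · rintro ⟨h1, h2⟩
      by_cases hx : x ≤ 2⁻¹
      · exact Or.inl ⟨⟨h1, hx⟩, hx⟩
      · exact Or.inr ⟨⟨le_of_not_ge hx, h2⟩, hx⟩
  have hcont : ContinuousOn k (Icc 0 1) := by
    rw [← hite]
    exact continuousOn_piecewise_ite hcont1 hcont2 hH hEq
  have hk0 : k 0 = p := by
    have : (0:ℝ) ∈ Iic (2⁻¹:ℝ) := by norm_num
    simp only [hk, Set.piecewise_eq_of_mem _ _ _ this, mul_zero, hg.2.1]
  have hk1 : k 1 = r := by
    have : (1:ℝ) ∉ Iic (2⁻¹:ℝ) := by norm_num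
    simp only [hk, Set.piecewise_eq_of_notMem _ _ _ this, mul_one]
    norm_num [hh.2.2.1]
  have hkmem : ∀ x ∈ Icc (0:ℝ) 1, k x ∈ S := by
    intro x hx
    by_cases hx2 : x ∈ Iic (2⁻¹:ℝ)
    · rw [hk, Set.piecewise_eq_of_mem _ _ _ hx2]
      exact hg.2.2.2 _ (himg1 x ⟨hx.1, hx2⟩)
    · rw [hk, Set.piecewise_eq_of_notMem _ _ _ hx2]
      have : (2⁻¹:ℝ) ≤ x := le_of_not_ge hx2
      exact hh.2.2.2 _ (himg2 x ⟨this, hx.2⟩)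
  refine ⟨k, ⟨hcont, hk0, hk1, hkmem⟩, ?_⟩
  have hsplit := eVariationOn.Icc_add_Icc k (s := univ) (by norm_num : (0:ℝ) ≤ 2⁻¹)
      (by norm_num : (2⁻¹:ℝ) ≤ 1) (mem_univ _)
  simp only [univ_inter] at hsplit
  rw [← hsplit]
  have hb1 : eVariationOn k (Icc 0 2⁻¹) ≤ eVariationOn g (Icc 0 1) := by
    have heq : EqOn k ((fun y => g y) ∘ (fun x => 2*x)) (Icc (0:ℝ) 2⁻¹) := by
      intro x hx
      exact Set.piecewise_eq_of_mem _ _ _ (hx.2 : x ∈ Iic (2⁻¹:ℝ))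
    rw [eVariationOn.eq_of_eqOn heq,
        eVariationOn.comp_eq_of_monotoneOn _ _
          ((show Monotone (fun x : ℝ => 2*x) from fun x y hxy => by dsimp; linarith).monotoneOn _)]
    refine eVariationOn.mono _ ?_
    rintro _ ⟨x, hx, rfl⟩
    exact himg1 x hx
  have hb2 : eVariationOn k (Icc 2⁻¹ 1) ≤ eVariationOn h (Icc 0 1) := by
    have heq : EqOn k ((fun y => h y) ∘ (fun x => 2*x - 1)) (Icc (2⁻¹:ℝ) 1) := by
      intro x hx
      by_cases hx2 : x ∈ Iic (2⁻¹:ℝ)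
      · have hxeq : x = 2⁻¹ := le_antisymm hx2 hx.1
        subst hxeq
        rw [hk, Set.piecewise_eq_of_mem _ _ _ hx2]
        simp only [Function.comp_apply]
        have hq : g 1 = h 0 := hg.2.2.1.trans hh.2.1.symm
        show g (2 * 2⁻¹) = h (2 * 2⁻¹ - 1)
        norm_num [hq]
      · rw [hk]; exact Set.piecewise_eq_of_notMem _ _ _ hx2
    have hmono2 : Monotone (fun x : ℝ => 2*x - 1) := fun x y hxy => by dsimp; linarith
    rw [eVariationOn.eq_of_eqOn heq, eVariationOn.comp_eq_of_monotoneOn _ _ (hmono2.monotoneOn _)]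
    refine eVariationOn.mono _ ?_
    rintro _ ⟨x, hx, rfl⟩
    exact himg2 x hx
  exact add_le_add hb1 hb2

lemma dS_triangle (S : Set Pt) (p q r : Pt) : dS S p r ≤ dS S p q + dS S q r := by
  have hrw : dS S p q + dS S q r =
      ⨅ (g : ℝ → Pt) (_ : IsPathIn S p q g) (h : ℝ → Pt) (_ : IsPathIn S q r h),
        (eVariationOn g (Icc 0 1) + eVariationOn h (Icc 0 1)) := by
    rw [dS, ENNReal.iInf_add]
    refine iInf_congr fun g => ?_
    rw [ENNReal.iInf_add]
    refine iInf_congr fun hg => ?_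
    rw [dS, ENNReal.add_iInf]
    exact iInf_congr fun h => ENNReal.add_iInf
  rw [hrw]
  refine le_iInf fun g => le_iInf fun hg => le_iInf fun h => le_iInf fun hh => ?_
  obtain ⟨k, hk, hkvar⟩ := path_concat hg hh
  exact (dS_le_of_path hk).trans hkvar

theorem dS_through_anchor (S : Set (WithLp 1 (ℝ × ℝ))) (s t a : WithLp 1 (ℝ × ℝ))
    (hs : s ∈ S) (ht : t ∈ S) (ha : a ∈ S)
    (B B' : Set (WithLp 1 (ℝ × ℝ))) (hB : B ⊆ S) (hB' : B' ⊆ S)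
    (hsepB : ∀ g : ℝ → WithLp 1 (ℝ × ℝ), IsPathIn S s t g → ∃ c ∈ Icc (0:ℝ) 1, g c ∈ B)
    (hsepB' : ∀ g : ℝ → WithLp 1 (ℝ × ℝ), IsPathIn S s t g → ∃ c ∈ Icc (0:ℝ) 1, g c ∈ B')
    (hanchor : ∀ p ∈ B, ∀ q ∈ B', dS S p q = dS S p a + dS S a q) :
    dS S s t = dS S s a + dS S a t := by
  refine le_antisymm (dS_triangle S s a t) ?_
  conv_rhs => rw [dS]
  refine le_iInf fun g => le_iInf fun hg => ?_
  obtain ⟨c, hc, hcB⟩ := hsepB g hg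
  obtain ⟨c', hc', hcB'⟩ := hsepB' g hg
  have hsplit : ∀ u v : ℝ, (0:ℝ) ≤ u → u ≤ v → v ≤ 1 →
      eVariationOn g (Icc 0 u) + eVariationOn g (Icc u v) + eVariationOn g (Icc v 1)
        = eVariationOn g (Icc 0 1) := by
    intro u v h0u huv hv1
    have h1 := eVariationOn.Icc_add_Icc g (s := univ) h0u huv (mem_univ u)
    have h2 := eVariationOn.Icc_add_Icc g (s := univ) (h0u.trans huv) hv1 (mem_univ v)
    simp only [univ_inter] at h1 h2
    rw [h1, h2]
  rcases le_total c c' with hcc | hcc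
  · rw [← hsplit c c' hc.1 hcc hc'.2]
    have e1 : dS S s (g c) ≤ eVariationOn g (Icc 0 c) := by
      have := dS_le_var_Icc hg.1 hg.2.2.2 (by norm_num) hc hc.1
      rwa [hg.2.1] at this
    have e2 : dS S (g c) (g c') ≤ eVariationOn g (Icc c c') :=
      dS_le_var_Icc hg.1 hg.2.2.2 hc hc' hcc
    have e3 : dS S (g c') t ≤ eVariationOn g (Icc c' 1) := by
      have := dS_le_var_Icc hg.1 hg.2.2.2 hc' (by norm_num) hc'.2
      rwa [hg.2.2.1] at this
    have hanc : dS S (g c) a + dS S a (g c') = dS S (g c) (g c') :=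
      (hanchor _ hcB _ hcB').symm
    have t1 : dS S s a ≤ dS S s (g c) + dS S (g c) a := dS_triangle S s (g c) a
    have t2 : dS S a t ≤ dS S a (g c') + dS S (g c') t := dS_triangle S a (g c') t
    calc dS S s a + dS S a t
        ≤ (dS S s (g c) + dS S (g c) a) + (dS S a (g c') + dS S (g c') t) :=
          add_le_add t1 t2
      _ = dS S s (g c) + (dS S (g c) a + dS S a (g c')) + dS S (g c') t := by ring
      _ = dS S s (g c) + dS S (g c) (g c') + dS S (g c') t := by rw [hanc]
      _ ≤ eVariationOn g (Icc 0 c) + eVariationOn g (Icc c c') + eVariationOn g (Icc c' 1) :=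
          add_le_add (add_le_add e1 e2) e3
  · rw [← hsplit c' c hc'.1 hcc hc.2]
    have e1 : dS S s (g c') ≤ eVariationOn g (Icc 0 c') := by
      have := dS_le_var_Icc hg.1 hg.2.2.2 (by norm_num) hc' hc'.1
      rwa [hg.2.1] at this
    have e2 : dS S (g c') (g c) ≤ eVariationOn g (Icc c' c) :=
      dS_le_var_Icc hg.1 hg.2.2.2 hc' hc hcc
    have e3 : dS S (g c) t ≤ eVariationOn g (Icc c 1) := by
      have := dS_le_var_Icc hg.1 hg.2.2.2 hc (by norm_num) hc.2
      rwa [hg.2.2.1] at this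
    have hanc : dS S (g c') (g c) = dS S (g c) a + dS S a (g c') := by
      rw [dS_symm S (g c') (g c)]
      exact hanchor _ hcB _ hcB'
    have t1 : dS S s a ≤ dS S s (g c') + dS S a (g c') := by
      have := dS_triangle S s (g c') a
      rwa [dS_symm S (g c') a] at this
    have t2 : dS S a t ≤ dS S (g c) a + dS S (g c) t := by
      have := dS_triangle S a (g c) t
      rwa [dS_symm S a (g c)] at this
    calc dS S s a + dS S a t
        ≤ (dS S s (g c') + dS S a (g c')) + (dS S (g c) a + dS S (g c) t) :=
          add_le_add t1 t2
      _ = dS S s (g c') + (dS S (g c) a + dS S a (g c')) + dS S (g c) t := by ring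
      _ = dS S s (g c') + dS S (g c') (g c) + dS S (g c) t := by rw [hanc]
      _ ≤ eVariationOn g (Icc 0 c') + eVariationOn g (Icc c' c) + eVariationOn g (Icc c 1) :=
          add_le_add (add_le_add e1 e2) e3
end
end
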